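/- Let tan Θᵀ_{x,h} have density f(t) = (ρ/t²)·exp(−μh − e^{−μh}ρ(1/t − x/h)) on (0, h/x] and 0 elsewhere, with ρ = λ/μ. Then its k-th moment equals c(x,h)·α^{k−1}·Γ(−k+1, αx/h), where c(x,h) = (λ/μ)·exp((λx/(μh))e^{−μh} − μh), α = (λ/μ)e^{−μh}, and Γ(s, y) = ∫_y^∞ t^{s−1}e^{−t} dt is the upper incomplete Gamma function. -/

import Mathlib

open MeasureTheory Real Set

/-- Upper incomplete Gamma function Γ(s, y) = ∫_y^∞ t^{s−1} e^{−t} dt. -/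
noncomputable def upperGamma (s y : ℝ) : ℝ :=
  ∫ t in Set.Ioi y, t ^ (s - 1) * Real.exp (-t)

/-- the k-th moment of the transmissive-RIS blockage tangent, whose
density is f(t) = (ρ/t²)·exp(−μh − e^{−μh}ρ(1/t − x/h)) on (0, h/x], equals
c(x,h)·α^{k−1}·Γ(−k+1, αx/h), with c(x,h) = (λ/μ)e^{(λx/(μh))e^{−μh} − μh} and
α = (λ/μ)e^{−μh}. -/
theorem transmissive_tangent_moments
    (lam mu x h : ℝ) (hlam : 0 < lam) (hmu : 0 < mu) (hx : 0 < x) (hh : 0 < h)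
    (k : ℕ) (hk : 1 ≤ k)
    (rho : ℝ) (hrho : rho = lam / mu)
    (c α : ℝ)
    (hc : c = (lam / mu) * Real.exp ((lam * x / (mu * h)) * Real.exp (-(mu * h)) - mu * h))
    (hα : α = (lam / mu) * Real.exp (-(mu * h))) :
    ∫ t in Set.Ioo 0 (h / x),
        t ^ k * ((rho / t ^ 2) *
          Real.exp (-(mu * h) - Real.exp (-(mu * h)) * rho * (1 / t - x / h)))
      = c * α ^ (k - 1) * upperGamma (-(k : ℝ) + 1) (α * x / h) := by
  obtain ⟨m, rfl⟩ : ∃ m, k = m + 1 := ⟨k - 1, (Nat.succ_pred_eq_of_pos hk).symm⟩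
  have hα0 : 0 < α := by rw [hα]; positivity
  have hrho0 : 0 < rho := by rw [hrho]; positivity
  set y : ℝ := α * x / h with hy
  have hy0 : 0 < y := by rw [hy]; positivity
  have hαρ : Real.exp (-(mu * h)) * rho = α := by rw [hα, hrho]; ring
  have hc' : c = rho * Real.exp (α * x / h - mu * h) := by
    rw [hc, hrho, hα]
    congr 2
    field_simp
  -- the image of Ioi y under u ↦ α / u is Ioo 0 (h/x)
  have himg : (fun u : ℝ => α / u) '' Set.Ioi y = Set.Ioo 0 (h / x) := by
    ext t
    constructor
    · rintro ⟨u, hu, rfl⟩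
      have hu0 : 0 < u := lt_trans hy0 hu
      refine ⟨div_pos hα0 hu0, ?_⟩
      have h1 : α / u < α / y := div_lt_div_of_pos_left hα0 hy0 hu
      have h2 : α / y = h / x := by
        rw [hy]; field_simp
      linarith
    · rintro ⟨ht0, ht1⟩
      refine ⟨α / t, ?_, ?_⟩
      · have h1 : α / (h / x) < α / t := div_lt_div_of_pos_left hα0 ht0 ht1
        have h2 : α / (h / x) = y := by rw [hy]; field_simp
        simpa [Set.mem_Ioi, h2] using h1
      · field_simp
  have hderiv : ∀ u ∈ Set.Ioi y,
      HasDerivWithinAt (fun u : ℝ => α / u) (-(α / u ^ 2)) (Set.Ioi y) u := by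
    intro u hu
    have hu0 : 0 < u := lt_trans hy0 hu
    have h1 : HasDerivAt (fun u : ℝ => α * u⁻¹) (α * -(u ^ 2)⁻¹) u :=
      (hasDerivAt_inv hu0.ne').const_mul α
    have h2 : α * -(u ^ 2)⁻¹ = -(α / u ^ 2) := by ring
    have h3 : (fun u : ℝ => α * u⁻¹) = fun u : ℝ => α / u := by
      funext v; rw [div_eq_mul_inv]
    rw [h2, h3] at h1
    exact h1.hasDerivWithinAt
  have hinj : Set.InjOn (fun u : ℝ => α / u) (Set.Ioi y) := by
    intro u hu v hv huv
    have hu0 : 0 < u := lt_trans hy0 hu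
    have hv0 : 0 < v := lt_trans hy0 hv
    simp only at huv
    field_simp at huv
    linarith
  rw [← himg,
    MeasureTheory.integral_image_eq_integral_abs_deriv_smul measurableSet_Ioi hderiv hinj,
    upperGamma, ← MeasureTheory.integral_const_mul]
  refine MeasureTheory.setIntegral_congr_fun measurableSet_Ioi (fun u hu => ?_)
  have hu0 : 0 < u := lt_trans hy0 hu
  have habs : |(-(α / u ^ 2))| = α / u ^ 2 := by
    rw [abs_neg, abs_of_pos (by positivity)]
  have he : (-(((m : ℝ) + 1)) + 1 - 1) = -(((m + 1 : ℕ) : ℝ)) := by push_cast; ring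
  have harg : -(mu * h) - Real.exp (-(mu * h)) * rho * (1 / (α / u) - x / h)
      = (α * x / h - mu * h) + (-u) := by
    rw [one_div_div, hαρ]
    field_simp
    ring
  simp only [smul_eq_mul, habs, harg, Real.exp_add, hc', Nat.add_sub_cancel]
  push_cast
  rw [he, Real.rpow_neg hu0.le, Real.rpow_natCast]
  field_simp
  rw [div_pow, div_mul_cancel₀ _ (pow_ne_zero _ hu0.ne'), pow_succ']
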